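/- In a discrete poset that is strongly connected, every closed interval is graded of finite height, i.e., all maximal chains of each interval are finite and of the same length. -/

import Mathlib

/-- An antichain cutset: a set intersecting each maximal chain in exactly one element. -/
def IsAntichainCutset {α : Type*} [PartialOrder α] (A : Set α) : Prop :=
  ∀ c : Set α, IsMaxChain (· ≤ ·) c → ∃! x, x ∈ c ∧ x ∈ A

/-- A poset is strongly connected if any two maximal chains are connected by a finite
sequence of maximal chains in which consecutive chains have symmetric difference of
cardinality two. -/
def StronglyConnectedOrder (α : Type*) [PartialOrder α] : Prop :=
  ∀ c d : Set α, IsMaxChain (· ≤ ·) c → IsMaxChain (· ≤ ·) d →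
    ∃ (n : ℕ) (f : ℕ → Set α), f 0 = c ∧ f n = d ∧
      (∀ i ≤ n, IsMaxChain (· ≤ ·) (f i)) ∧
      ∀ i < n, (symmDiff (f i) (f (i + 1))).ncard = 2

/-- A poset is discrete if every closed interval has a maximal chain of finite length. -/
def DiscretePoset (α : Type*) [PartialOrder α] : Prop :=
  ∀ a b : α, a ≤ b → ∃ c : Set (Set.Icc a b), IsMaxChain (· ≤ ·) c ∧ c.Finite

section Aux

variable {α : Type*} [PartialOrder α]

open Set

/-- An element comparable with every element of a maximal chain belongs to it. -/
lemma mem_maxChain_of_forall_comp {β : Type*} [PartialOrder β] {d : Set β}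
    (hd : IsMaxChain (· ≤ ·) d) {x : β} (hx : ∀ y ∈ d, x ≤ y ∨ y ≤ x) : x ∈ d := by
  have hch : IsChain (· ≤ ·) (insert x d) := hd.1.insert (fun y hy _ => hx y hy)
  have h := hd.2 hch (Set.subset_insert _ _)
  rw [h]; exact Set.mem_insert _ _

/-- Two maximal chains whose symmetric difference has two elements differ by a swap. -/
lemma flip_step [DecidableEq α] {F G : Set α}
    (hF : IsMaxChain (· ≤ ·) F) (hG : IsMaxChain (· ≤ ·) G)
    (h : (symmDiff F G).ncard = 2) :
    ∃ x y : α, (Equiv.swap x y) '' F = G := by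
  have hne : F ≠ G := by
    rintro rfl
    simp [symmDiff_self] at h
  have h1 : (F \ G).Nonempty := by
    rw [Set.nonempty_iff_ne_empty]
    intro hemp
    exact hne (hF.2 hG.1 (Set.diff_eq_empty.mp hemp))
  have h2 : (G \ F).Nonempty := by
    rw [Set.nonempty_iff_ne_empty]
    intro hemp
    exact hne (hG.2 hF.1 (Set.diff_eq_empty.mp hemp)).symm
  obtain ⟨x, hx⟩ := h1
  obtain ⟨y, hy⟩ := h2
  have hxy : x ≠ y := fun hh => hy.2 (hh ▸ hx.1)
  obtain ⟨u, v, huv, hs⟩ := Set.ncard_eq_two.mp h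
  have hxm : x ∈ ({u, v} : Set α) := by
    rw [← hs, Set.mem_symmDiff]; exact Or.inl ⟨hx.1, hx.2⟩
  have hym : y ∈ ({u, v} : Set α) := by
    rw [← hs, Set.mem_symmDiff]; exact Or.inr ⟨hy.1, hy.2⟩
  have hxm' : x = u ∨ x = v := by simpa using hxm
  have hym' : y = u ∨ y = v := by simpa using hym
  have hpair : ({u, v} : Set α) = {x, y} := by
    rcases hxm' with rfl | rfl <;> rcases hym' with rfl | rfl
    · exact absurd rfl hxy
    · rfl
    · exact Set.pair_comm _ _
    · exact absurd rfl hxy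
  have hDelta : symmDiff F G = {x, y} := hs.trans hpair
  have hmemDelta : ∀ z, (z ∈ F ∧ z ∉ G) ∨ (z ∈ G ∧ z ∉ F) → z = x ∨ z = y := by
    intro z hz
    have hz2 : z ∈ symmDiff F G := Set.mem_symmDiff.mpr hz
    rw [hDelta] at hz2
    simpa using hz2
  refine ⟨x, y, ?_⟩
  ext z
  constructor
  · rintro ⟨w, hw, rfl⟩
    rcases eq_or_ne w x with rfl | hwx
    · rw [Equiv.swap_apply_left]; exact hy.1
    · rcases eq_or_ne w y with rfl | hwy
      · exact absurd hw hy.2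
      · rw [Equiv.swap_apply_of_ne_of_ne hwx hwy]
        by_contra hwG
        rcases hmemDelta w (Or.inl ⟨hw, hwG⟩) with rfl | rfl
        · exact hwx rfl
        · exact hwy rfl
  · intro hz
    rcases eq_or_ne z y with rfl | hzy
    · exact ⟨x, hx.1, Equiv.swap_apply_left _ _⟩
    · have hzF : z ∈ F := by
        by_contra hzF
        rcases hmemDelta z (Or.inr ⟨hz, hzF⟩) with rfl | rfl
        · exact hx.2 hz
        · exact hzy rfl
      have hzx : z ≠ x := fun hh => hx.2 (hh ▸ hz)
      exact ⟨z, hzF, Equiv.swap_apply_of_ne_of_ne hzx hzy⟩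

/-- Along a walk of flips, chains are related by a finitely supported bijection. -/
lemma walk_equiv {n : ℕ} {f : ℕ → Set α}
    (hmax : ∀ i ≤ n, IsMaxChain (· ≤ ·) (f i))
    (hflip : ∀ i < n, (symmDiff (f i) (f (i + 1))).ncard = 2) :
    ∀ i ≤ n, ∃ e : α ≃ α, {z | e z ≠ z}.Finite ∧ e '' (f 0) = f i := by
  classical
  intro i
  induction i with
  | zero =>
    intro _
    refine ⟨Equiv.refl α, ?_, by simp⟩
    convert Set.finite_empty
    ext z; simp
  | succ i ih =>
    intro hi
    obtain ⟨e, hefin, heim⟩ := ih (le_of_lt (Nat.lt_of_succ_le hi))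
    obtain ⟨x, y, hswap⟩ := flip_step (hmax i (le_of_lt (Nat.lt_of_succ_le hi)))
      (hmax (i + 1) hi) (hflip i (Nat.lt_of_succ_le hi))
    refine ⟨e.trans (Equiv.swap x y), ?_, ?_⟩
    · apply Set.Finite.subset (hefin.union ((Set.finite_singleton y).insert x))
      intro z hz
      simp only [Set.mem_union, Set.mem_setOf_eq, Set.mem_insert_iff,
        Set.mem_singleton_iff]
      by_contra hc
      push_neg at hc
      obtain ⟨hez, hzx, hzy⟩ := hc
      apply hz
      show (Equiv.swap x y) (e z) = z
      rw [hez, Equiv.swap_apply_of_ne_of_ne hzx hzy]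
    · show ((Equiv.swap x y) ∘ e) '' f 0 = f (i + 1)
      rw [Set.image_comp, heim, hswap]

/-- A finitely supported bijection mapping `C` onto `D` gives equal difference sizes. -/
lemma count_of_equiv {C D : Set α} (e : α ≃ α) (hfin : {z | e z ≠ z}.Finite)
    (hCD : e '' C = D) :
    (C \ D).Finite ∧ (D \ C).Finite ∧ (C \ D).ncard = (D \ C).ncard := by
  set S : Set α := {z | e z ≠ z} with hS
  set A : Set α := C ∩ S with hA
  have hAfin : A.Finite := hfin.inter_of_right _
  have hAim : (e '' A).Finite := hAfin.image _
  have hCD1 : C \ D = A \ (e '' A) := by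
    ext z
    constructor
    · rintro ⟨hzC, hzD⟩
      have hzS : z ∈ S := by
        by_contra hzS
        have hez : e z = z := not_not.mp hzS
        exact hzD (hCD ▸ ⟨z, hzC, hez⟩)
      refine ⟨⟨hzC, hzS⟩, ?_⟩
      rintro ⟨w, hw, hwz⟩
      exact hzD (hCD ▸ ⟨w, hw.1, hwz⟩)
    · rintro ⟨⟨hzC, hzS⟩, hzim⟩
      refine ⟨hzC, ?_⟩
      intro hzD
      rw [← hCD] at hzD
      obtain ⟨w, hwC, hwz⟩ := hzD
      have hwS : w ∈ S := by
        by_contra hwS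
        have hew : e w = w := not_not.mp hwS
        rw [hew] at hwz
        subst hwz
        exact hzS hew
      exact hzim ⟨w, ⟨hwC, hwS⟩, hwz⟩
  have hCD2 : D \ C = (e '' A) \ A := by
    ext z
    constructor
    · rintro ⟨hzD, hzC⟩
      rw [← hCD] at hzD
      obtain ⟨w, hwC, hwz⟩ := hzD
      have hwS : w ∈ S := by
        by_contra hwS
        have hew : e w = w := not_not.mp hwS
        rw [hew] at hwz
        exact hzC (hwz ▸ hwC)
      exact ⟨⟨w, ⟨hwC, hwS⟩, hwz⟩, fun hzA => hzC hzA.1⟩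
    · rintro ⟨⟨w, hwA, hwz⟩, hzA⟩
      refine ⟨hCD ▸ ⟨w, hwA.1, hwz⟩, ?_⟩
      intro hzC
      by_cases hzS : z ∈ S
      · exact hzA ⟨hzC, hzS⟩
      · have hez : e z = z := not_not.mp hzS
        have hwzeq : w = z := e.injective (by rw [hwz, hez])
        exact hzS (hwzeq ▸ hwA.2)
  have hcards : A.ncard = (e '' A).ncard :=
    (Set.ncard_image_of_injective A e.injective).symm
  have hkey := (Set.ncard_eq_ncard_iff_ncard_diff_eq_ncard_diff hAfin hAim).mp hcards
  refine ⟨hCD1 ▸ (hAfin.diff), hCD2 ▸ (hAim.diff), ?_⟩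
  rw [hCD1, hCD2]
  exact hkey

end Aux

/-- In a discrete strongly connected poset, every closed interval is graded of finite
height: all maximal chains of the interval are finite and of the same cardinality. -/
theorem discrete_stronglyConnected_intervals_graded {α : Type*} [PartialOrder α]
    (hd : DiscretePoset α) (hsc : StronglyConnectedOrder α) :
    ∀ a b : α, a ≤ b → ∃ k : ℕ, ∀ c : Set (Set.Icc a b),
      IsMaxChain (· ≤ ·) c → c.Finite ∧ c.ncard = k := by
  intro a b hab
  obtain ⟨c₀, hc₀max, hc₀fin⟩ := hd a b hab
  refine ⟨c₀.ncard, ?_⟩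
  intro d hdmax
  have haI : a ∈ Set.Icc a b := Set.left_mem_Icc.mpr hab
  have hbI : b ∈ Set.Icc a b := Set.right_mem_Icc.mpr hab
  -- bottom and top belong to every maximal chain of the interval
  have hbot : ∀ (s : Set (Set.Icc a b)), IsMaxChain (· ≤ ·) s → (⟨a, haI⟩ : Set.Icc a b) ∈ s := by
    intro s hs
    exact mem_maxChain_of_forall_comp hs (fun y _ => Or.inl y.2.1)
  have htop : ∀ (s : Set (Set.Icc a b)), IsMaxChain (· ≤ ·) s → (⟨b, hbI⟩ : Set.Icc a b) ∈ s := by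
    intro s hs
    exact mem_maxChain_of_forall_comp hs (fun y _ => Or.inr y.2.2)
  set c' : Set α := Subtype.val '' c₀ with hc'
  set d' : Set α := Subtype.val '' d with hd'
  have hc'sub : c' ⊆ Set.Icc a b := by rintro z ⟨w, _, rfl⟩; exact w.2
  have hd'sub : d' ⊆ Set.Icc a b := by rintro z ⟨w, _, rfl⟩; exact w.2
  have hc'chain : IsChain (· ≤ ·) c' :=
    IsChain.image_of_map_rel (· ≤ ·) (· ≤ ·) Subtype.val (fun _ _ h => h) hc₀max.1
  obtain ⟨C, hCmax, hCsub⟩ := hc'chain.exists_maxChain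
  have hac' : a ∈ c' := ⟨⟨a, haI⟩, hbot c₀ hc₀max, rfl⟩
  have hbc' : b ∈ c' := ⟨⟨b, hbI⟩, htop c₀ hc₀max, rfl⟩
  have had' : a ∈ d' := ⟨⟨a, haI⟩, hbot d hdmax, rfl⟩
  have hbd' : b ∈ d' := ⟨⟨b, hbI⟩, htop d hdmax, rfl⟩
  have haC : a ∈ C := hCsub hac'
  have hbC : b ∈ C := hCsub hbc'
  -- C ∩ I = c'
  have hCI : C ∩ Set.Icc a b = c' := by
    apply Set.Subset.antisymm
    · intro z hz
      have hs₂chain : IsChain (· ≤ ·) {x : Set.Icc a b | (x : α) ∈ C} := by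
        intro x hx y hy hxy
        have hne : (x : α) ≠ (y : α) := fun hh => hxy (Subtype.ext hh)
        exact hCmax.1 hx hy hne
      have hsub₂ : c₀ ⊆ {x : Set.Icc a b | (x : α) ∈ C} := fun x hx => hCsub ⟨x, hx, rfl⟩
      have heq := hc₀max.2 hs₂chain hsub₂
      have hmem : (⟨z, hz.2⟩ : Set.Icc a b) ∈ {x : Set.Icc a b | (x : α) ∈ C} := hz.1
      rw [← heq] at hmem
      exact ⟨⟨z, hz.2⟩, hmem, rfl⟩
    · intro z hz
      exact ⟨hCsub hz, hc'sub hz⟩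
  set E : Set α := C \ Set.Icc a b with hE
  have hEcomp : ∀ w ∈ E, w ≤ a ∨ b ≤ w := by
    rintro w ⟨hwC, hwI⟩
    have hwa : w ≠ a := fun hh => hwI (hh ▸ haI)
    have hwb : w ≠ b := fun hh => hwI (hh ▸ hbI)
    rcases hCmax.1 hwC haC hwa with h1 | h1
    · exact Or.inl h1
    · rcases hCmax.1 hwC hbC hwb with h2 | h2
      · exact absurd ⟨h1, h2⟩ hwI
      · exact Or.inr h2
  set D : Set α := d' ∪ E with hD
  have hcrossE : ∀ w ∈ E, ∀ z ∈ Set.Icc a b, w ≤ z ∨ z ≤ w := by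
    intro w hw z hz
    rcases hEcomp w hw with h | h
    · exact Or.inl (h.trans hz.1)
    · exact Or.inr (hz.2.trans h)
  have hDchain : IsChain (· ≤ ·) D := by
    intro x hx y hy hxy
    rcases hx with hx | hx <;> rcases hy with hy | hy
    · obtain ⟨u, hu, rfl⟩ := hx
      obtain ⟨v, hv, rfl⟩ := hy
      have hne : u ≠ v := fun hh => hxy (by rw [hh])
      exact hdmax.1 hu hv hne
    · exact (hcrossE y hy x (hd'sub hx)).symm.imp (fun h => h) (fun h => h)
    · exact hcrossE x hx y (hd'sub hy)
    · exact hCmax.1 hx.1 hy.1 hxy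
  have hDmax : IsMaxChain (· ≤ ·) D := by
    refine ⟨hDchain, ?_⟩
    intro t ht hsub
    refine Set.Subset.antisymm hsub ?_
    intro z hz
    by_contra hzn
    by_cases hzI : z ∈ Set.Icc a b
    · -- z can be added to d in the subtype, contradiction with maximality
      have hch : IsChain (· ≤ ·) (insert (⟨z, hzI⟩ : Set.Icc a b) d) := by
        apply hdmax.1.insert
        intro y hy hne
        have hyt : (y : α) ∈ t := hsub (Or.inl ⟨y, hy, rfl⟩)
        have hzy : z ≠ (y : α) := fun hh => hne (Subtype.ext hh)
        exact ht hz hyt hzy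
      have heq := hdmax.2 hch (Set.subset_insert _ _)
      have hmem : (⟨z, hzI⟩ : Set.Icc a b) ∈ d := by rw [heq]; exact Set.mem_insert _ _
      exact hzn (Or.inl ⟨⟨z, hzI⟩, hmem, rfl⟩)
    · -- z is comparable with everything in C, contradiction with maximality of C
      have hzab : z ≤ a ∨ b ≤ z := by
        have hzat : z ≠ a := fun hh => hzI (hh ▸ haI)
        have hat : a ∈ t := hsub (Or.inl had')
        rcases ht hz hat hzat with h1 | h1
        · exact Or.inl h1
        · have hzbt : z ≠ b := fun hh => hzI (hh ▸ hbI)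
          have hbt : b ∈ t := hsub (Or.inl hbd')
          rcases ht hz hbt hzbt with h2 | h2
          · exact absurd ⟨h1, h2⟩ hzI
          · exact Or.inr h2
      have hch : IsChain (· ≤ ·) (insert z C) := by
        apply hCmax.1.insert
        intro w hwC hne
        by_cases hwI : w ∈ Set.Icc a b
        · rcases hzab with h | h
          · exact Or.inl (h.trans hwI.1)
          · exact Or.inr (hwI.2.trans h)
        · have hwt : w ∈ t := hsub (Or.inr ⟨hwC, hwI⟩)
          exact ht hz hwt hne
      have heq := hCmax.2 hch (Set.subset_insert _ _)
      have hzC : z ∈ C := by rw [heq]; exact Set.mem_insert _ _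
      exact hzn (Or.inr ⟨hzC, hzI⟩)
  -- connect C and D by a walk, get a finitely supported bijection
  obtain ⟨n, f, hf0, hfn, hmax, hflip⟩ := hsc C D hCmax hDmax
  obtain ⟨e, hefin, heim⟩ := walk_equiv hmax hflip n le_rfl
  rw [hf0, hfn] at heim
  obtain ⟨hfin1, hfin2, hcount⟩ := count_of_equiv e hefin heim
  -- identify the differences
  have hCdecomp : C = c' ∪ E := by
    rw [hE, ← hCI]
    exact (Set.inter_union_diff C (Set.Icc a b)).symm
  have hdiff1 : C \ D = c' \ d' := by
    ext z
    constructor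
    · rintro ⟨hzC, hzD⟩
      rw [hCdecomp] at hzC
      rcases hzC with hzc | hzE
      · exact ⟨hzc, fun hh => hzD (Or.inl hh)⟩
      · exact absurd (Or.inr hzE) hzD
    · rintro ⟨hzc, hzd⟩
      refine ⟨hCsub hzc, ?_⟩
      rintro (h | h)
      · exact hzd h
      · exact h.2 (hc'sub hzc)
  have hdiff2 : D \ C = d' \ c' := by
    ext z
    constructor
    · rintro ⟨hzD, hzC⟩
      rcases hzD with hzd | hzE
      · exact ⟨hzd, fun hh => hzC (hCsub hh)⟩
      · exact absurd hzE.1 hzC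
    · rintro ⟨hzd, hzc⟩
      refine ⟨Or.inl hzd, ?_⟩
      intro hzC
      exact hzc (hCI ▸ (⟨hzC, hd'sub hzd⟩ : z ∈ C ∩ Set.Icc a b))
  rw [hdiff1] at hfin1 hcount
  rw [hdiff2] at hfin2 hcount
  have hc'fin : c'.Finite := hc₀fin.image _
  have hd'fin : d'.Finite := by
    apply Set.Finite.subset (hfin2.union hc'fin)
    intro z hz
    by_cases h : z ∈ c'
    · exact Or.inr h
    · exact Or.inl ⟨hz, h⟩
  have hdfin : d.Finite :=
    Set.Finite.of_finite_image hd'fin (Subtype.val_injective.injOn)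
  have hcard : c'.ncard = d'.ncard := by
    rw [Set.ncard_eq_ncard_iff_ncard_diff_eq_ncard_diff hc'fin hd'fin]
    exact hcount
  have h1 : c₀.ncard = c'.ncard := (Set.ncard_image_of_injective _ Subtype.val_injective).symm
  have h2 : d.ncard = d'.ncard := (Set.ncard_image_of_injective _ Subtype.val_injective).symm
  exact ⟨hdfin, by rw [h2, ← hcard, ← h1]⟩
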